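/- Let c_0, c > 0, σ ≥ 1, let b = (b_j) be a sequence of nonnegative reals, and let (Ξ_ν) indexed by finitely supported multi-indices satisfy Ξ_0 ≤ c_0 and, for all ν ≠ 0, Ξ_ν ≤ c ∑_{0 ≠ m ≤ ν} C(ν,m) (|m|!)^σ b^m Ξ_{ν-m}. Then for every multi-index ν, Ξ_ν ≤ c_0 · c^{1-δ_{|ν|,0}} · (c+1)^{max(|ν|-1,0)} · (|ν|!)^σ · b^ν. -/

import Mathlib

open Finset

private lemma deg_sum (m : ℕ →₀ ℕ) : (m.sum fun _ k => k) = Finsupp.degree m := rfl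

private lemma degree_add' (a b : ℕ →₀ ℕ) :
    Finsupp.degree (a + b) = Finsupp.degree a + Finsupp.degree b := by
  rw [← deg_sum, ← deg_sum, ← deg_sum]
  exact Finsupp.sum_add_index' (fun _ => rfl) (fun _ _ _ => rfl)

private lemma degree_single' (a n : ℕ) : Finsupp.degree (Finsupp.single a n) = n := by
  rw [← deg_sum]; exact Finsupp.sum_single_index rfl

private lemma conv_aux (g : ℕ → ℝ) (p q : ℕ) :
    ∑ i ∈ Finset.range (p+1), ∑ k ∈ Finset.range (q+1),
        (p.choose i : ℝ) * (q.choose k : ℝ) * g (i+k)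
      = ∑ s ∈ Finset.range (p+q+1), ((p+q).choose s : ℝ) * g s := by
  have h1 : ∀ s, ((p+q).choose s : ℝ) * g s
      = ∑ ij ∈ Finset.HasAntidiagonal.antidiagonal s, (p.choose ij.1 : ℝ) * (q.choose ij.2 : ℝ) * g (ij.1 + ij.2) := by
    intro s
    rw [Nat.add_choose_eq]
    push_cast
    rw [Finset.sum_mul]
    refine Finset.sum_congr rfl fun ij hij => ?_
    rw [Finset.HasAntidiagonal.mem_antidiagonal] at hij
    rw [hij]
  simp_rw [h1]
  rw [← Finset.sum_biUnion ?hdisj]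
  case hdisj =>
    intro x _ y _ hxy
    refine Finset.disjoint_left.mpr fun ij hx hy => hxy ?_
    rw [Finset.HasAntidiagonal.mem_antidiagonal] at hx hy
    rw [← hx, hy]
  rw [← Finset.sum_product']
  refine Finset.sum_subset ?_ ?_
  · rintro ⟨i, k⟩ hik
    rw [Finset.mem_product, Finset.mem_range, Finset.mem_range] at hik
    rw [Finset.mem_biUnion]
    exact ⟨i + k, Finset.mem_range.mpr (by omega), Finset.HasAntidiagonal.mem_antidiagonal.mpr rfl⟩
  · rintro ⟨i, k⟩ _ hik
    rw [Finset.mem_product, Finset.mem_range, Finset.mem_range] at hik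
    push_neg at hik
    rcases Nat.lt_or_ge p i with h | h
    · simp [Nat.choose_eq_zero_of_lt h]
    · have : q < k := by rcases Nat.lt_or_ge q k with h' | h'; exact h'; omega
      simp [Nat.choose_eq_zero_of_lt this]

private lemma key_aux (ν : ℕ →₀ ℕ) : ∀ g : ℕ → ℝ,
    ∑ m ∈ Finset.Iic ν, (∏ j ∈ ν.support, ((ν j).choose (m j) : ℝ)) * g (Finsupp.degree m)
      = ∑ k ∈ Finset.range (Finsupp.degree ν + 1),
          ((Finsupp.degree ν).choose k : ℝ) * g k := by
  induction ν using Finsupp.induction with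
  | zero =>
    intro g
    have hIic : Finset.Iic (0 : ℕ →₀ ℕ) = {0} := by
      ext m; simp [le_zero_iff]
    simp [hIic]
  | single_add a p f hfa hp IH =>
    intro g
    have hfa0 : f a = 0 := Finsupp.notMem_support_iff.mp hfa
    have hsupp : (Finsupp.single a p + f).support = insert a f.support := by
      rw [Finsupp.support_add_eq, Finsupp.support_single_ne_zero a hp, ← Finset.insert_eq]
      rw [Finsupp.support_single_ne_zero a hp]
      simpa using hfa
    have happa : (Finsupp.single a p + f) a = p := by simp [hfa0]
    have happj : ∀ j, j ≠ a → (Finsupp.single a p + f) j = f j := by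
      intro j hja
      simp [Finsupp.single_eq_of_ne hja]
    have hdeg : Finsupp.degree (Finsupp.single a p + f) = p + Finsupp.degree f := by
      rw [degree_add', degree_single']
    have hre : ∑ m ∈ Finset.Iic (Finsupp.single a p + f),
        (∏ j ∈ (Finsupp.single a p + f).support,
          (((Finsupp.single a p + f) j).choose (m j) : ℝ)) * g (Finsupp.degree m)
      = ∑ x ∈ Finset.range (p+1) ×ˢ Finset.Iic f,
        ((p.choose x.1 : ℝ) * ∏ j ∈ f.support, ((f j).choose (x.2 j) : ℝ))
          * g (x.1 + Finsupp.degree x.2) := by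
      refine Finset.sum_nbij' (i := fun m => (m a, m.erase a))
        (j := fun x => Finsupp.single a x.1 + x.2) ?_ ?_ ?_ ?_ ?_
      · intro m hm
        rw [Finset.mem_Iic] at hm
        rw [Finset.mem_product, Finset.mem_range]
        constructor
        · have := (Finsupp.le_def.mp hm) a
          rw [happa] at this
          omega
        · rw [Finset.mem_Iic, Finsupp.le_def]
          intro j
          rcases eq_or_ne j a with rfl | hja
          · simp
          · rw [Finsupp.erase_ne hja, ← happj j hja]
            exact (Finsupp.le_def.mp hm) j
      · rintro ⟨i, m⟩ hx
        dsimp only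
        rw [Finset.mem_product, Finset.mem_range, Finset.mem_Iic] at hx
        rw [Finset.mem_Iic]
        exact add_le_add (by
          rw [Finsupp.le_def]; intro j
          rcases eq_or_ne j a with rfl | hja
          · simpa using Nat.lt_succ_iff.mp hx.1
          · simp [Finsupp.single_eq_of_ne hja]) hx.2
      · intro m _
        dsimp only
        exact Finsupp.single_add_erase a m
      · rintro ⟨i, m⟩ hx
        rw [Finset.mem_product, Finset.mem_Iic] at hx
        have hma : m a = 0 := Nat.le_zero.mp (hfa0 ▸ (Finsupp.le_def.mp hx.2) a)
        have h1 : (Finsupp.single a i + m) a = i := by simp [hma]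
        have h2 : (Finsupp.single a i + m).erase a = m := by
          ext j
          rcases eq_or_ne j a with rfl | hja
          · simp [hma]
          · rw [Finsupp.erase_ne hja]
            simp [Finsupp.single_eq_of_ne hja]
        dsimp only
        rw [h1, h2]
      · intro m hm
        dsimp only
        rw [Finset.mem_Iic] at hm
        have hdm : Finsupp.degree m = m a + Finsupp.degree (m.erase a) := by
          conv_lhs => rw [← Finsupp.single_add_erase a m]
          rw [degree_add', degree_single']
        rw [hsupp, Finset.prod_insert hfa, happa, hdm]
        congr 1
        congr 1
        refine Finset.prod_congr rfl fun j hj => ?_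
        have hja : j ≠ a := by rintro rfl; exact hfa hj
        rw [happj j hja, Finsupp.erase_ne hja]
    rw [hre, Finset.sum_product]
    simp_rw [mul_assoc, ← Finset.mul_sum]
    have : ∀ i ∈ Finset.range (p+1),
        (p.choose i : ℝ) * ∑ m ∈ Finset.Iic f,
            (∏ j ∈ f.support, ((f j).choose (m j) : ℝ)) * g (i + Finsupp.degree m)
        = (p.choose i : ℝ) * ∑ k ∈ Finset.range (Finsupp.degree f + 1),
            ((Finsupp.degree f).choose k : ℝ) * g (i + k) := by
      intro i _
      rw [IH (fun k => g (i + k))]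
    rw [Finset.sum_congr rfl this]
    simp_rw [Finset.mul_sum, ← mul_assoc]
    rw [conv_aux g p (Finsupp.degree f), hdeg]

private lemma geom_aux (c : ℝ) (n : ℕ) (hn : 1 ≤ n) :
    ∑ k ∈ Finset.range n,
        c ^ (if n - (k+1) = 0 then 0 else 1) * (c+1) ^ (n - (k+1) - 1)
      = (c+1) ^ (n-1) := by
  induction n, hn using Nat.le_induction with
  | base => simp
  | succ n hn IH =>
    rw [Finset.sum_range_succ']
    have h1 : ∀ k, n + 1 - (k + 1 + 1) = n - (k + 1) := fun k => by omega
    simp_rw [h1]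
    rw [IH]
    have h2 : n + 1 - 1 = n := by omega
    rw [h2]
    have h3 : (if n = 0 then 0 else 1) = 1 := if_neg (by omega)
    rw [h3]
    have h4 : n - 1 + 1 = n := by omega
    have h5 : ((c+1):ℝ) ^ n = (c+1) ^ (n-1) * (c+1) := by rw [← pow_succ, h4]
    rw [pow_one, h5]
    ring

private lemma fact_bound (σ : ℝ) (hσ : 1 ≤ σ) (n k : ℕ) (hk : k ≤ n) :
    (n.choose k : ℝ) * ((k.factorial : ℝ) ^ σ * ((n-k).factorial : ℝ) ^ σ)
      ≤ (n.factorial : ℝ) ^ σ := by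
  have h1 : (k.factorial : ℝ) ^ σ * ((n-k).factorial : ℝ) ^ σ
      = ((k.factorial * (n-k).factorial : ℕ) : ℝ) ^ σ := by
    push_cast
    rw [← Real.mul_rpow (by positivity) (by positivity)]
  have h2 : (n.choose k : ℝ) ≤ (n.choose k : ℝ) ^ σ := by
    calc (n.choose k : ℝ) = (n.choose k : ℝ) ^ (1:ℝ) := (Real.rpow_one _).symm
    _ ≤ (n.choose k : ℝ) ^ σ := Real.rpow_le_rpow_of_exponent_le
        (by exact_mod_cast Nat.one_le_iff_ne_zero.mpr (Nat.choose_pos hk).ne') hσ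
  calc (n.choose k : ℝ) * ((k.factorial : ℝ) ^ σ * ((n-k).factorial : ℝ) ^ σ)
      ≤ (n.choose k : ℝ) ^ σ * (((k.factorial * (n-k).factorial : ℕ) : ℝ)) ^ σ := by
        rw [h1]; exact mul_le_mul_of_nonneg_right h2 (by positivity)
    _ = ((n.choose k * (k.factorial * (n-k).factorial) : ℕ) : ℝ) ^ σ := by
        push_cast
        rw [← Real.mul_rpow (by positivity) (by positivity)]
    _ = (n.factorial : ℝ) ^ σ := by
        rw [← mul_assoc, Nat.choose_mul_factorial_mul_factorial hk]

private lemma bsplit (b : ℕ → ℝ) (m ν : ℕ →₀ ℕ) (hm : m ≤ ν) :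
    (∏ j ∈ m.support, b j ^ m j) * (∏ j ∈ (ν - m).support, b j ^ (ν - m) j)
      = ∏ j ∈ ν.support, b j ^ ν j := by
  have hle : ∀ j, m j ≤ ν j := Finsupp.le_def.mp hm
  have hsub : ∀ j, (ν - m) j = ν j - m j := fun j => Finsupp.tsub_apply ν m j
  have hms : m.support ⊆ ν.support := fun j hj => by
    rw [Finsupp.mem_support_iff] at hj ⊢
    exact fun h => hj (Nat.le_zero.mp (h ▸ hle j))
  have hvs : (ν - m).support ⊆ ν.support := fun j hj => by
    rw [Finsupp.mem_support_iff] at hj ⊢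
    intro h
    exact hj (by rw [hsub j, h]; omega)
  rw [Finset.prod_subset hms (fun j _ hj => by
      rw [Finsupp.notMem_support_iff.mp hj, pow_zero]),
    Finset.prod_subset hvs (fun j _ hj => by
      rw [Finsupp.notMem_support_iff.mp hj, pow_zero]),
    ← Finset.prod_mul_distrib]
  refine Finset.prod_congr rfl fun j _ => ?_
  rw [← pow_add, hsub j]
  have := hle j
  congr 1
  omega

theorem stmt_6 (c₀ c : ℝ) (hc₀ : 0 < c₀) (hc : 0 < c) (σ : ℝ) (hσ : 1 ≤ σ)
    (b : ℕ → ℝ) (hb : ∀ j, 0 ≤ b j) (Ξ : (ℕ →₀ ℕ) → ℝ)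
    (h0 : Ξ 0 ≤ c₀)
    (hrec : ∀ ν : ℕ →₀ ℕ, ν ≠ 0 →
      Ξ ν ≤ c * ∑ m ∈ (Finset.Iic ν).erase 0,
        (∏ j ∈ ν.support, (Nat.choose (ν j) (m j) : ℝ)) *
          (Nat.factorial (m.sum fun _ k => k) : ℝ) ^ σ *
          (∏ j ∈ m.support, b j ^ m j) * Ξ (ν - m)) :
    ∀ ν : ℕ →₀ ℕ,
      Ξ ν ≤ c₀ * c ^ (if (ν.sum fun _ k => k) = 0 then 0 else 1) *
        (c + 1) ^ (max ((ν.sum fun _ k => k) - 1) 0) *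
        (Nat.factorial (ν.sum fun _ k => k) : ℝ) ^ σ *
        ∏ j ∈ ν.support, b j ^ ν j := by
  suffices H : ∀ n : ℕ, ∀ ν : ℕ →₀ ℕ, Finsupp.degree ν = n →
      Ξ ν ≤ c₀ * c ^ (if (ν.sum fun _ k => k) = 0 then 0 else 1) *
        (c + 1) ^ (max ((ν.sum fun _ k => k) - 1) 0) *
        (Nat.factorial (ν.sum fun _ k => k) : ℝ) ^ σ *
        ∏ j ∈ ν.support, b j ^ ν j by
    exact fun ν => H _ ν rfl
  intro n
  induction n using Nat.strong_induction_on with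
  | _ n IH =>
  intro ν hν
  simp only [deg_sum, hν, Nat.max_zero]
  rcases Nat.eq_zero_or_pos n with rfl | hn
  · have hν0 : ν = 0 := (Finsupp.degree_eq_zero_iff ν).mp hν
    subst hν0
    simpa using h0
  · have hν0 : ν ≠ 0 := by
      intro h
      rw [h, map_zero] at hν
      omega
    set B := ∏ j ∈ ν.support, b j ^ ν j with hB
    have hBnn : 0 ≤ B := by
      rw [hB]; exact Finset.prod_nonneg fun j _ => pow_nonneg (hb j) _
    set G : ℕ → ℝ := fun k => c₀ * c ^ (if n - k = 0 then 0 else 1) * (c+1) ^ (n - k - 1) *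
        (((n-k).factorial : ℝ)) ^ σ * ((k.factorial : ℝ)) ^ σ with hG
    have hr := hrec ν hν0
    simp only [deg_sum] at hr
    have step1 : ∀ m ∈ (Finset.Iic ν).erase 0,
        (∏ j ∈ ν.support, ((ν j).choose (m j) : ℝ)) *
            ((Finsupp.degree m).factorial : ℝ) ^ σ *
            (∏ j ∈ m.support, b j ^ m j) * Ξ (ν - m)
          ≤ (∏ j ∈ ν.support, ((ν j).choose (m j) : ℝ)) * (G (Finsupp.degree m) * B) := by
      intro m hm
      rw [Finset.mem_erase, Finset.mem_Iic] at hm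
      obtain ⟨hm0, hmle⟩ := hm
      have hk1 : 1 ≤ Finsupp.degree m :=
        Nat.one_le_iff_ne_zero.mpr fun h => hm0 ((Finsupp.degree_eq_zero_iff m).mp h)
      have hdsub : Finsupp.degree (ν - m) + Finsupp.degree m = n := by
        rw [← degree_add', tsub_add_cancel_of_le hmle, hν]
      have hkn : Finsupp.degree m ≤ n := by omega
      have hdnm : Finsupp.degree (ν - m) = n - Finsupp.degree m := by omega
      have hlt : n - Finsupp.degree m < n := by omega
      have hIH := IH _ hlt (ν - m) hdnm
      simp only [deg_sum, hdnm, Nat.max_zero] at hIH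
      have hA : 0 ≤ (∏ j ∈ ν.support, ((ν j).choose (m j) : ℝ)) *
          ((Finsupp.degree m).factorial : ℝ) ^ σ * (∏ j ∈ m.support, b j ^ m j) := by
        have h1 : 0 ≤ (∏ j ∈ ν.support, ((ν j).choose (m j) : ℝ)) :=
          Finset.prod_nonneg fun j _ => Nat.cast_nonneg _
        have h2 : 0 ≤ ((Finsupp.degree m).factorial : ℝ) ^ σ := Real.rpow_nonneg (Nat.cast_nonneg _) _
        have h3 : 0 ≤ (∏ j ∈ m.support, b j ^ m j) :=
          Finset.prod_nonneg fun j _ => pow_nonneg (hb j) _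
        positivity
      calc (∏ j ∈ ν.support, ((ν j).choose (m j) : ℝ)) *
            ((Finsupp.degree m).factorial : ℝ) ^ σ *
            (∏ j ∈ m.support, b j ^ m j) * Ξ (ν - m)
          ≤ (∏ j ∈ ν.support, ((ν j).choose (m j) : ℝ)) *
            ((Finsupp.degree m).factorial : ℝ) ^ σ *
            (∏ j ∈ m.support, b j ^ m j) *
            (c₀ * c ^ (if n - Finsupp.degree m = 0 then 0 else 1) *
              (c + 1) ^ (n - Finsupp.degree m - 1) *
              (((n - Finsupp.degree m).factorial : ℝ)) ^ σ *
              ∏ j ∈ (ν - m).support, b j ^ (ν - m) j) :=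
            mul_le_mul_of_nonneg_left hIH hA
        _ = (∏ j ∈ ν.support, ((ν j).choose (m j) : ℝ)) * (G (Finsupp.degree m) * B) := by
            rw [hG, hB, ← bsplit b m ν hmle]
            ring
    have hkey := key_aux ν (fun k => G k * B)
    calc Ξ ν ≤ c * ∑ m ∈ (Finset.Iic ν).erase 0,
          (∏ j ∈ ν.support, ((ν j).choose (m j) : ℝ)) *
            ((Finsupp.degree m).factorial : ℝ) ^ σ *
            (∏ j ∈ m.support, b j ^ m j) * Ξ (ν - m) := hr
      _ ≤ c * ∑ m ∈ (Finset.Iic ν).erase 0,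
            (∏ j ∈ ν.support, ((ν j).choose (m j) : ℝ)) * (G (Finsupp.degree m) * B) :=
          mul_le_mul_of_nonneg_left (Finset.sum_le_sum step1) hc.le
      _ = c * ((∑ m ∈ Finset.Iic ν,
            (∏ j ∈ ν.support, ((ν j).choose (m j) : ℝ)) * (G (Finsupp.degree m) * B)) - G 0 * B) := by
          have h0mem : (0 : ℕ →₀ ℕ) ∈ Finset.Iic ν := Finset.mem_Iic.mpr zero_le
          have hsplit := Finset.add_sum_erase (Finset.Iic ν)
            (fun m => (∏ j ∈ ν.support, ((ν j).choose (m j) : ℝ)) * (G (Finsupp.degree m) * B)) h0mem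
          simp only [Finsupp.coe_zero, Pi.zero_apply, Nat.choose_zero_right, Nat.cast_one,
            Finset.prod_const_one, map_zero, one_mul] at hsplit
          rw [← hsplit]
          ring
      _ = c * ((∑ k ∈ Finset.range (n+1), (n.choose k : ℝ) * (G k * B)) - G 0 * B) := by
          rw [hkey, hν]
      _ = c * ∑ k ∈ Finset.range n, (n.choose (k+1) : ℝ) * (G (k+1) * B) := by
          rw [Finset.sum_range_succ']
          simp only [Nat.choose_zero_right, Nat.cast_one, one_mul]
          ring
      _ ≤ c * ∑ k ∈ Finset.range n,
            c₀ * ((n.factorial : ℝ) ^ σ * B) *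
              (c ^ (if n - (k+1) = 0 then 0 else 1) * (c+1) ^ (n - (k+1) - 1)) := by
          refine mul_le_mul_of_nonneg_left (Finset.sum_le_sum ?_) hc.le
          intro k hk
          rw [Finset.mem_range] at hk
          have hfb := fact_bound σ hσ n (k+1) (by omega)
          calc (n.choose (k+1) : ℝ) * (G (k+1) * B)
              = ((n.choose (k+1) : ℝ) *
                  (((k+1).factorial : ℝ) ^ σ * ((n-(k+1)).factorial : ℝ) ^ σ)) *
                ((c₀ * (c ^ (if n - (k+1) = 0 then 0 else 1) * (c+1) ^ (n - (k+1) - 1))) * B) := by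
                rw [hG]
                ring
            _ ≤ (n.factorial : ℝ) ^ σ *
                ((c₀ * (c ^ (if n - (k+1) = 0 then 0 else 1) * (c+1) ^ (n - (k+1) - 1))) * B) := by
                refine mul_le_mul_of_nonneg_right hfb ?_
                have h1 : (0:ℝ) ≤ c ^ (if n - (k+1) = 0 then 0 else 1) := pow_nonneg hc.le _
                have h2 : (0:ℝ) ≤ (c+1) ^ (n - (k+1) - 1) := pow_nonneg (by linarith) _
                positivity
            _ = c₀ * ((n.factorial : ℝ) ^ σ * B) *
                (c ^ (if n - (k+1) = 0 then 0 else 1) * (c+1) ^ (n - (k+1) - 1)) := by ring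
      _ = c * (c₀ * ((n.factorial : ℝ) ^ σ * B) *
            ∑ k ∈ Finset.range n,
              c ^ (if n - (k+1) = 0 then 0 else 1) * (c+1) ^ (n - (k+1) - 1)) := by
          rw [← Finset.mul_sum]
      _ = c * (c₀ * ((n.factorial : ℝ) ^ σ * B) * (c+1) ^ (n-1)) := by
          rw [geom_aux c n hn]
      _ = c₀ * c ^ (if n = 0 then 0 else 1) * (c + 1) ^ (n - 1) * ((n.factorial : ℝ)) ^ σ * B := by
          rw [if_neg (by omega)]
          ring
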